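/- Let m ≥ 4, let G = (ℤ/mℤ)², let g ∈ G, and let S = f₁^[m−1] · f₂^[m−1] · (f₁+f₂) ∈ Υ_nu(G), where (f₁,f₂) is a basis of G. If S' = f₁^[−1] · (f₁+f₂)^[−1] · S · (f₁+g) · (f₁+f₂−g) ∈ Υ_nu(G), then g ∈ {0, f₂} and S' = S. -/
import Mathlib


/-- `(e₁, e₂)` is a basis of the abelian group `G`, i.e. `G = ⟨e₁⟩ ⊕ ⟨e₂⟩`. -/
def IsBasis {G : Type*} [AddCommGroup G] (e₁ e₂ : G) : Prop :=
  AddSubgroup.zmultiples e₁ ⊔ AddSubgroup.zmultiples e₂ = ⊤ ∧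
    AddSubgroup.zmultiples e₁ ⊓ AddSubgroup.zmultiples e₂ = ⊥

/-- `Υ(G)` for `G = (ℤ/mℤ)²`: all sequences `e₁^[m-1] · ∏_{i=1}^m (xᵢe₁ + e₂)` for some
basis `(e₁, e₂)` and `x₁, …, x_m ∈ [0, m-1]` with `x₁ + ⋯ + x_m ≡ 1 (mod m)`. -/
def Upsilon (m : ℕ) : Set (Multiset (ZMod m × ZMod m)) :=
  { S | ∃ (e₁ e₂ : ZMod m × ZMod m) (x : Fin m → ℕ),
      IsBasis e₁ e₂ ∧ (∀ i, x i ≤ m - 1) ∧ (∑ i, x i) % m = 1 % m ∧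
      S = Multiset.replicate (m - 1) e₁ +
          Multiset.map (fun i => x i • e₁ + e₂) (Finset.univ : Finset (Fin m)).val }

/-- `Υ_u(G)`: members of `Υ(G)` with a unique term of multiplicity `m - 1`. -/
def UpsilonU (m : ℕ) : Set (Multiset (ZMod m × ZMod m)) :=
  { S | S ∈ Upsilon m ∧ ∃! g, S.count g = m - 1 }

/-- `Υ_nu(G)`: sequences `e₁^[m-1] · e₂^[m-1] · (e₁ + e₂)` for some basis `(e₁, e₂)`. -/
def UpsilonNU (m : ℕ) : Set (Multiset (ZMod m × ZMod m)) :=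
  { S | ∃ (e₁ e₂ : ZMod m × ZMod m), IsBasis e₁ e₂ ∧
      S = Multiset.replicate (m - 1) e₁ + Multiset.replicate (m - 1) e₂ + {e₁ + e₂} }


lemma zmult_ne_top (m : ℕ) (hm : 2 ≤ m) (x : ZMod m × ZMod m) :
    AddSubgroup.zmultiples x ≠ ⊤ := by
  intro h
  have hx : m • x = 0 := by
    ext <;> simp [ZMod.natCast_self]
  have h1 : Nat.card (AddSubgroup.zmultiples x) = addOrderOf x := Nat.card_zmultiples x
  have h2 : addOrderOf x ∣ m := addOrderOf_dvd_of_nsmul_eq_zero hx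
  have h3 : Nat.card (AddSubgroup.zmultiples x) = m * m := by
    rw [h, AddSubgroup.card_top, Nat.card_prod, Nat.card_zmod]
  have h4 := Nat.le_of_dvd (by omega) h2
  nlinarith

lemma basis_facts (m : ℕ) (hm : 2 ≤ m) (e₁ e₂ : ZMod m × ZMod m)
    (hb : IsBasis e₁ e₂) :
    e₁ ≠ 0 ∧ e₂ ≠ 0 ∧ e₁ ≠ e₂ ∧ e₁ + e₂ ≠ e₁ ∧ e₁ + e₂ ≠ e₂ := by
  obtain ⟨hsup, hinf⟩ := hb
  have h1 : e₁ ≠ 0 := by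
    rintro rfl
    rw [AddSubgroup.zmultiples_zero_eq_bot, bot_sup_eq] at hsup
    exact zmult_ne_top m hm e₂ hsup
  have h2 : e₂ ≠ 0 := by
    rintro rfl
    rw [AddSubgroup.zmultiples_zero_eq_bot, sup_bot_eq] at hsup
    exact zmult_ne_top m hm e₁ hsup
  have h3 : e₁ ≠ e₂ := by
    rintro rfl
    rw [inf_idem] at hinf
    exact h1 (by simpa [hinf] using AddSubgroup.mem_zmultiples e₁)
  refine ⟨h1, h2, h3, ?_, ?_⟩ <;> intro h
  · exact h2 (add_eq_left.mp h)
  · exact h1 (add_eq_right.mp h)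

theorem stmt_11 (m : ℕ) (hm : 4 ≤ m) (g f₁ f₂ : ZMod m × ZMod m)
    (hbasis : IsBasis f₁ f₂)
    (S : Multiset (ZMod m × ZMod m))
    (hS : S = Multiset.replicate (m - 1) f₁ + Multiset.replicate (m - 1) f₂ + {f₁ + f₂})
    (hSNU : S ∈ UpsilonNU m)
    (S' : Multiset (ZMod m × ZMod m))
    (hS' : S' = (S - {f₁, f₁ + f₂}) + {f₁ + g, f₁ + f₂ - g})
    (hS'U : S' ∈ UpsilonNU m) :
    (g = 0 ∨ g = f₂) ∧ S' = S := by
  obtain ⟨hf1, hf2, hf12, hf3, hf4⟩ := basis_facts m (by omega) f₁ f₂ hbasis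
  obtain ⟨e₁, e₂, hbe, hS'e⟩ := hS'U
  obtain ⟨he1, he2, he12, he3, he4⟩ := basis_facts m (by omega) e₁ e₂ hbe
  -- every multiplicity in S' is 0, 1 or m - 1
  have hcnt : ∀ a : ZMod m × ZMod m,
      S'.count a = 0 ∨ S'.count a = 1 ∨ S'.count a = m - 1 := by
    intro a
    rw [hS'e]
    simp only [Multiset.count_add, Multiset.count_replicate, Multiset.count_singleton]
    by_cases h1 : e₁ = a
    · subst h1
      rw [if_pos rfl, if_neg (fun h : e₂ = e₁ => he12 h.symm),
        if_neg (fun h : e₁ = e₁ + e₂ => he3 h.symm)]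
      omega
    · rw [if_neg h1]
      by_cases h2 : e₂ = a
      · subst h2
        rw [if_pos rfl, if_neg (fun h : e₂ = e₁ + e₂ => he4 h.symm)]
        omega
      · rw [if_neg h2]
        by_cases h3 : a = e₁ + e₂
        · rw [if_pos h3]; omega
        · rw [if_neg h3]; omega
  -- the multiplicity of f₂ in S'
  have hcf2 : S'.count f₂ = (m - 1) +
      ((if f₂ = f₁ + f₂ - g then 1 else 0) + (if f₂ = f₁ + g then 1 else 0)) := by
    rw [hS', hS]
    simp only [Multiset.count_add, Multiset.count_sub, Multiset.count_replicate,
      Multiset.count_singleton, Multiset.insert_eq_cons, Multiset.count_cons]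
    rw [if_neg hf12, if_neg (fun h : f₂ = f₁ => hf12 h.symm)]
    simp only [if_true]
    omega
  have hle : S'.count f₂ ≤ m - 1 := by rcases hcnt f₂ with h | h | h <;> omega
  have hg1 : ¬ f₂ = f₁ + g := by
    intro h; rw [if_pos h] at hcf2; split_ifs at hcf2 <;> omega
  have hg2 : ¬ f₂ = f₁ + f₂ - g := by
    intro h; rw [if_pos h] at hcf2; split_ifs at hcf2 <;> omega
  -- the multiplicity of f₁ in S'
  have hcf1 : S'.count f₁ = (m - 1) - 1 +
      ((if f₁ = f₁ + f₂ - g then 1 else 0) + (if f₁ = f₁ + g then 1 else 0)) := by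
    rw [hS', hS]
    simp only [Multiset.count_add, Multiset.count_sub, Multiset.count_replicate,
      Multiset.count_singleton, Multiset.insert_eq_cons, Multiset.count_cons]
    rw [if_neg (fun h : f₂ = f₁ => hf12 h.symm)]
    simp only [if_true]
    omega
  have hi1 : f₁ = f₁ + g ↔ g = 0 :=
    ⟨fun h => add_eq_left.mp h.symm, fun h => by rw [h, add_zero]⟩
  have hi2 : f₁ = f₁ + f₂ - g ↔ g = f₂ :=
    ⟨fun h => add_left_cancel (eq_sub_iff_add_eq.mp h),
      fun h => by rw [h]; exact (eq_sub_iff_add_eq.mpr rfl)⟩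
  have hgor : g = 0 ∨ g = f₂ := by
    by_cases h1 : f₁ = f₁ + f₂ - g
    · exact Or.inr (hi2.mp h1)
    by_cases h2 : f₁ = f₁ + g
    · exact Or.inl (hi1.mp h2)
    rw [if_neg h1, if_neg h2] at hcf1
    rcases hcnt f₁ with h | h | h <;> omega
  have hpair : ({f₁ + g, f₁ + f₂ - g} : Multiset (ZMod m × ZMod m)) = {f₁, f₁ + f₂} := by
    rcases hgor with rfl | h
    · simp
    · rw [h]
      have h1 : f₁ + f₂ - f₂ = f₁ := by abel
      rw [h1, Multiset.pair_comm]
  have hle2 : ({f₁, f₁ + f₂} : Multiset (ZMod m × ZMod m)) ≤ S := by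
    have h1 : ({f₁} : Multiset (ZMod m × ZMod m)) ≤
        Multiset.replicate (m - 1) f₁ + Multiset.replicate (m - 1) f₂ :=
      le_trans (Multiset.singleton_le.mpr (Multiset.mem_replicate.mpr ⟨by omega, rfl⟩))
        (Multiset.le_add_right _ _)
    have h2 : ({f₁, f₁ + f₂} : Multiset (ZMod m × ZMod m)) = {f₁} + {f₁ + f₂} := by
      rw [Multiset.insert_eq_cons, Multiset.singleton_add]
    rw [hS, h2]
    exact add_le_add h1 le_rfl
  refine ⟨hgor, ?_⟩
  rw [hS', hpair, tsub_add_cancel_of_le hle2]
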